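/- Let Γ be an m×m real symmetric positive definite matrix, Ĉ an n×n real symmetric positive semidefinite matrix, H an m×n real matrix, y ∈ ℝᵐ, v̂ ∈ ℝⁿ, F a k×n real matrix, G an l×n real matrix, f ∈ ℝᵏ and g ∈ ℝˡ; set y' = y − Hv̂. Suppose: (i) (a*, v*) is feasible for and minimizes ½(y' − Hv')ᵀΓ⁻¹(y' − Hv') + ½⟨a, v'⟩ over the nonempty set {(a, v') : Ĉa = v', F(v̂ + v') = f, G(v̂ + v') ≤ g componentwise}; (ii) for each ε > 0, v_ε ∈ ℝⁿ satisfies Fv_ε = f, Gv_ε ≤ g and minimizes J_ε(v) = ½(y − Hv)ᵀΓ⁻¹(y − Hv) + ½(v − v̂)ᵀ(Ĉ + εIₙ)⁻¹(v − v̂) over {v : Fv = f, Gv ≤ g}. Then v_ε converges to v̂ + v* as ε → 0 from the right. -/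

import Mathlib

open Matrix

variable {p : ℕ}

lemma psd_nonneg {M : Matrix (Fin p) (Fin p) ℝ} (hM : M.PosSemidef) (x : Fin p → ℝ) :
    0 ≤ x ⬝ᵥ M.mulVec x := by simpa using hM.dotProduct_mulVec_nonneg x

lemma dot_self_nonneg (x : Fin p → ℝ) : 0 ≤ x ⬝ᵥ x :=
  Finset.sum_nonneg fun _ _ => mul_self_nonneg _

lemma symm_dot {M : Matrix (Fin p) (Fin p) ℝ} (hM : M.IsHermitian) (v w : Fin p → ℝ) :
    v ⬝ᵥ M.mulVec w = (M.mulVec v) ⬝ᵥ w := by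
  rw [Matrix.dotProduct_mulVec, ← Matrix.vecMul_transpose]
  congr 1
  have : Mᵀ = M := by
    have := hM.eq
    simpa [Matrix.conjTranspose_eq_transpose_of_trivial] using this
  rw [this]

lemma quad_bound (M : Matrix (Fin p) (Fin p) ℝ) (u : Fin p → ℝ) :
    u ⬝ᵥ M.mulVec u ≤ (∑ i, ∑ j, |M i j|) * (u ⬝ᵥ u) := by
  have hsq : ∀ i : Fin p, u i ^ 2 ≤ u ⬝ᵥ u := by
    intro i
    have : u ⬝ᵥ u = ∑ j, u j ^ 2 := by simp [dotProduct, sq]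
    rw [this]
    exact Finset.single_le_sum (fun j _ => sq_nonneg (u j)) (Finset.mem_univ i)
  have : u ⬝ᵥ M.mulVec u = ∑ i, ∑ j, u i * (M i j * u j) := by
    simp [dotProduct, Matrix.mulVec, Finset.mul_sum]
  rw [this, Finset.sum_mul]
  refine Finset.sum_le_sum fun i _ => ?_
  rw [Finset.sum_mul]
  refine Finset.sum_le_sum fun j _ => ?_
  have h1 : u i * (M i j * u j) ≤ |M i j| * (|u i| * |u j|) := by
    calc u i * (M i j * u j) ≤ |u i * (M i j * u j)| := le_abs_self _
    _ = |M i j| * (|u i| * |u j|) := by rw [abs_mul, abs_mul]; ring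
  refine h1.trans ?_
  have h2 : |u i| * |u j| ≤ u ⬝ᵥ u := by
    nlinarith [hsq i, hsq j, sq_nonneg (|u i| - |u j|), abs_nonneg (u i), abs_nonneg (u j),
      sq_abs (u i), sq_abs (u j)]
  exact mul_le_mul_of_nonneg_left h2 (abs_nonneg _)

lemma smul_one_posdef {ε : ℝ} (hε : 0 < ε) :
    (ε • (1 : Matrix (Fin p) (Fin p) ℝ)).PosDef := by
  refine ⟨?_, fun x hx => ?_⟩
  · simp [Matrix.IsHermitian]
  · exact ((Matrix.PosDef.one (n := Fin p) (R := ℝ)).smul hε).2 hx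

lemma inv_mulVec_cancel {P : Matrix (Fin p) (Fin p) ℝ} (hP : P.PosDef) (x : Fin p → ℝ) :
    P⁻¹.mulVec (P.mulVec x) = x := by
  rw [Matrix.mulVec_mulVec, Matrix.nonsing_inv_mul P (isUnit_iff_isUnit_det _ |>.mp hP.isUnit),
    Matrix.one_mulVec]

lemma mulVec_inv_cancel {P : Matrix (Fin p) (Fin p) ℝ} (hP : P.PosDef) (x : Fin p → ℝ) :
    P.mulVec (P⁻¹.mulVec x) = x := by
  rw [Matrix.mulVec_mulVec, Matrix.mul_nonsing_inv P (isUnit_iff_isUnit_det _ |>.mp hP.isUnit),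
    Matrix.one_mulVec]

lemma fenchel {P : Matrix (Fin p) (Fin p) ℝ} (hP : P.PosDef) (u a : Fin p → ℝ) :
    2*(a ⬝ᵥ u) - a ⬝ᵥ P.mulVec a ≤ u ⬝ᵥ P⁻¹.mulVec u := by
  have h0 := psd_nonneg hP.inv.posSemidef (u - P.mulVec a)
  have e1 : P⁻¹.mulVec (P.mulVec a) = a := inv_mulVec_cancel hP a
  have e2 : (P.mulVec a) ⬝ᵥ P⁻¹.mulVec u = a ⬝ᵥ u := by
    rw [← symm_dot hP.1 a (P⁻¹.mulVec u), mulVec_inv_cancel hP]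
  have e3 : (P.mulVec a) ⬝ᵥ a = a ⬝ᵥ P.mulVec a := dotProduct_comm _ _
  have e4 : u ⬝ᵥ a = a ⬝ᵥ u := dotProduct_comm _ _
  rw [Matrix.mulVec_sub, sub_dotProduct, dotProduct_sub,
    dotProduct_sub, e1, e2, e3, e4] at h0
  linarith

lemma parallelogram (A : Matrix (Fin p) (Fin p) ℝ) (s t : Fin p → ℝ) :
    (s+t) ⬝ᵥ A.mulVec (s+t) + (s-t) ⬝ᵥ A.mulVec (s-t)
      = 2*(s ⬝ᵥ A.mulVec s) + 2*(t ⬝ᵥ A.mulVec t) := by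
  simp only [Matrix.mulVec_add, Matrix.mulVec_sub, dotProduct_add,
    dotProduct_sub, add_dotProduct, sub_dotProduct]
  ring

section Pfacts
variable {C : Matrix (Fin p) (Fin p) ℝ} {ε : ℝ}

lemma P_posdef (hC : C.PosSemidef) (hε : 0 < ε) :
    (C + ε • (1 : Matrix (Fin p) (Fin p) ℝ)).PosDef :=
  Matrix.PosDef.posSemidef_add hC (smul_one_posdef hε)

lemma Pmv (x : Fin p → ℝ) :
    (C + ε • (1 : Matrix (Fin p) (Fin p) ℝ)).mulVec x = C.mulVec x + ε • x := by
  rw [Matrix.add_mulVec, Matrix.smul_mulVec, Matrix.one_mulVec]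

lemma Pquad (x : Fin p → ℝ) :
    x ⬝ᵥ (C + ε • (1 : Matrix (Fin p) (Fin p) ℝ)).mulVec x
      = x ⬝ᵥ C.mulVec x + ε * (x ⬝ᵥ x) := by
  rw [Pmv, dotProduct_add, dotProduct_smul, smul_eq_mul]

lemma P_lower (hC : C.PosSemidef) (x : Fin p → ℝ) :
    ε * (x ⬝ᵥ x) ≤ x ⬝ᵥ (C + ε • (1 : Matrix (Fin p) (Fin p) ℝ)).mulVec x := by
  rw [Pquad]
  have := psd_nonneg hC x
  linarith

lemma P_upper (x : Fin p → ℝ) :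
    x ⬝ᵥ (C + ε • (1 : Matrix (Fin p) (Fin p) ℝ)).mulVec x
      ≤ ((∑ i, ∑ j, |C i j|) + ε) * (x ⬝ᵥ x) := by
  rw [Pquad]
  have := quad_bound C x
  nlinarith [dot_self_nonneg x]

lemma Pinv_lower (hC : C.PosSemidef) (hε : 0 < ε) (x : Fin p → ℝ) :
    (x ⬝ᵥ x) / ((∑ i, ∑ j, |C i j|) + ε)
      ≤ x ⬝ᵥ (C + ε • (1 : Matrix (Fin p) (Fin p) ℝ))⁻¹.mulVec x := by
  set K : ℝ := ∑ i, ∑ j, |C i j| with hK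
  have hK0 : 0 ≤ K := Finset.sum_nonneg fun i _ => Finset.sum_nonneg fun j _ => abs_nonneg _
  have hKε : 0 < K + ε := by linarith
  have hf := fenchel (P_posdef hC hε) x ((1/(K+ε)) • x)
  have e1 : ((1/(K+ε)) • x) ⬝ᵥ x = (1/(K+ε)) * (x ⬝ᵥ x) := by
    rw [smul_dotProduct, smul_eq_mul]
  have e2 : ((1/(K+ε)) • x) ⬝ᵥ (C + ε • (1 : Matrix (Fin p) (Fin p) ℝ)).mulVec ((1/(K+ε)) • x)
      = (1/(K+ε))^2 * (x ⬝ᵥ (C + ε • (1 : Matrix (Fin p) (Fin p) ℝ)).mulVec x) := by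
    rw [Matrix.mulVec_smul, smul_dotProduct, dotProduct_smul, smul_eq_mul,
      smul_eq_mul]
    ring
  rw [e1, e2] at hf
  have hub := P_upper (C := C) (ε := ε) x
  have hxx := dot_self_nonneg x
  have h2 : (1/(K+ε))^2 * (x ⬝ᵥ (C + ε • (1 : Matrix (Fin p) (Fin p) ℝ)).mulVec x)
      ≤ (1/(K+ε))^2 * ((K+ε) * (x ⬝ᵥ x)) := by
    apply mul_le_mul_of_nonneg_left _ (by positivity)
    rw [hK]; exact hub
  have heq : 2 * ((1/(K+ε)) * (x ⬝ᵥ x)) - (1/(K+ε))^2 * ((K+ε) * (x ⬝ᵥ x))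
      = (x ⬝ᵥ x) / (K+ε) := by field_simp; ring
  linarith

end Pfacts

variable {C : Matrix (Fin p) (Fin p) ℝ} {ε : ℝ}



-- (d) : ε |P⁻¹x|² ≤ x ⬝ᵥ P⁻¹ x
lemma Pinv_sq_bound (hC : C.PosSemidef) (hε : 0 < ε) (x : Fin p → ℝ) :
    ε * ((C + ε • (1 : Matrix (Fin p) (Fin p) ℝ))⁻¹.mulVec x ⬝ᵥ
        (C + ε • (1 : Matrix (Fin p) (Fin p) ℝ))⁻¹.mulVec x)
      ≤ x ⬝ᵥ (C + ε • (1 : Matrix (Fin p) (Fin p) ℝ))⁻¹.mulVec x := by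
  set P := C + ε • (1 : Matrix (Fin p) (Fin p) ℝ) with hPdef
  have hP : P.PosDef := P_posdef hC hε
  have h := P_lower hC (ε := ε) (P⁻¹.mulVec x)
  rw [← hPdef] at h
  have e : (P⁻¹.mulVec x) ⬝ᵥ P.mulVec (P⁻¹.mulVec x) = x ⬝ᵥ P⁻¹.mulVec x := by
    rw [mulVec_inv_cancel hP, dotProduct_comm]
  rw [e] at h
  exact h

-- (e) : x ⬝ᵥ P⁻¹ x ≤ (x⬝ᵥx)/ε
lemma Pinv_upper (hC : C.PosSemidef) (hε : 0 < ε) (x : Fin p → ℝ) :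
    x ⬝ᵥ (C + ε • (1 : Matrix (Fin p) (Fin p) ℝ))⁻¹.mulVec x ≤ (x ⬝ᵥ x) / ε := by
  set P := C + ε • (1 : Matrix (Fin p) (Fin p) ℝ) with hPdef
  have hP : P.PosDef := P_posdef hC hε
  set w := P⁻¹.mulVec x with hw
  have hxw : x = P.mulVec w := (mulVec_inv_cancel hP x).symm
  -- x ⬝ᵥ P⁻¹ x = w ⬝ᵥ P w
  have e1 : x ⬝ᵥ P⁻¹.mulVec x = w ⬝ᵥ P.mulVec w := by
    have hwx : P⁻¹.mulVec x = w := rfl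
    rw [hwx]
    conv_lhs => rw [hxw]
    exact (symm_dot hP.1 w w).symm
  -- x ⬝ᵥ x = w ⬝ᵥ P (P w)  and  ≥ ε w ⬝ᵥ P w
  have e2 : x ⬝ᵥ x = w ⬝ᵥ P.mulVec (P.mulVec w) := by
    conv_lhs => rw [hxw]
    rw [← symm_dot hP.1]
  have key : ε * (w ⬝ᵥ P.mulVec w) ≤ w ⬝ᵥ P.mulVec (P.mulVec w) := by
    have expand : w ⬝ᵥ P.mulVec (P.mulVec w) - ε * (w ⬝ᵥ P.mulVec w)
        = (C.mulVec w) ⬝ᵥ (C.mulVec w) + ε * (w ⬝ᵥ C.mulVec w) := by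
      have h1 : P.mulVec (P.mulVec w) = C.mulVec (P.mulVec w) + ε • (P.mulVec w) := Pmv _
      have h2 : P.mulVec w = C.mulVec w + ε • w := Pmv _
      rw [h1, h2, Matrix.mulVec_add, Matrix.mulVec_smul]
      simp only [dotProduct_add, dotProduct_smul, smul_eq_mul]
      have h3 : w ⬝ᵥ C.mulVec (C.mulVec w) = (C.mulVec w) ⬝ᵥ (C.mulVec w) := by
        rw [symm_dot hC.1]
      rw [h3]
      ring
    have h4 : 0 ≤ (C.mulVec w) ⬝ᵥ (C.mulVec w) := dot_self_nonneg _
    have h5 : 0 ≤ w ⬝ᵥ C.mulVec w := psd_nonneg hC w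
    nlinarith
  rw [e1, le_div_iff₀ hε, e2]
  nlinarith [key]

-- (f)
lemma vstar_bound (hC : C.PosSemidef) (hε : 0 < ε) (a : Fin p → ℝ) :
    (C.mulVec a) ⬝ᵥ (C + ε • (1 : Matrix (Fin p) (Fin p) ℝ))⁻¹.mulVec (C.mulVec a)
      ≤ a ⬝ᵥ C.mulVec a := by
  set P := C + ε • (1 : Matrix (Fin p) (Fin p) ℝ) with hPdef
  have hP : P.PosDef := P_posdef hC hε
  set v := C.mulVec a with hv
  have hvPa : v = P.mulVec a - ε • a := by
    rw [hPdef, Pmv]; abel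
  have hinv : P⁻¹.mulVec v = a - ε • P⁻¹.mulVec a := by
    rw [hvPa, Matrix.mulVec_sub, Matrix.mulVec_smul, inv_mulVec_cancel hP]
  have expand : v ⬝ᵥ P⁻¹.mulVec v
      = a ⬝ᵥ P.mulVec a - 2*ε*(a ⬝ᵥ a) + ε^2 * (a ⬝ᵥ P⁻¹.mulVec a) := by
    rw [hinv]
    conv_lhs => rw [hvPa]
    simp only [sub_dotProduct, dotProduct_sub, smul_dotProduct,
      dotProduct_smul, smul_eq_mul]
    have e1 : (P.mulVec a) ⬝ᵥ a = a ⬝ᵥ P.mulVec a := dotProduct_comm _ _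
    have e2 : (P.mulVec a) ⬝ᵥ (P⁻¹.mulVec a) = a ⬝ᵥ a := by
      rw [← symm_dot hP.1 a (P⁻¹.mulVec a), mulVec_inv_cancel hP]
    rw [e1, e2]
    ring
  have hub := Pinv_upper hC hε a
  rw [← hPdef] at hub
  have hPa : a ⬝ᵥ P.mulVec a = a ⬝ᵥ C.mulVec a + ε * (a ⬝ᵥ a) := by
    rw [hPdef, Pquad]
  have h1 : ε^2 * (a ⬝ᵥ P⁻¹.mulVec a) ≤ ε^2 * ((a ⬝ᵥ a)/ε) :=
    mul_le_mul_of_nonneg_left hub (by positivity)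
  have h2 : ε^2 * ((a ⬝ᵥ a)/ε) = ε * (a ⬝ᵥ a) := by field_simp
  rw [expand, hPa]
  linarith

section MainAux
variable {p : ℕ}

lemma dot_le_sq {x : Fin p → ℝ} (i : Fin p) : (x i)^2 ≤ x ⬝ᵥ x := by
  have : x ⬝ᵥ x = ∑ j, x j ^ 2 := by simp [dotProduct, sq]
  rw [this]
  exact Finset.single_le_sum (fun j _ => sq_nonneg (x j)) (Finset.mem_univ i)

lemma two_smul_quad (A : Matrix (Fin p) (Fin p) ℝ) (z : Fin p → ℝ) :
    ((2:ℝ) • z) ⬝ᵥ A.mulVec ((2:ℝ) • z) = 4 * (z ⬝ᵥ A.mulVec z) := by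
  rw [Matrix.mulVec_smul, smul_dotProduct, dotProduct_smul,
    smul_eq_mul, smul_eq_mul]
  ring

lemma mulVec_continuous {q : ℕ} (A : Matrix (Fin q) (Fin p) ℝ) :
    Continuous fun v : Fin p → ℝ => A.mulVec v := by
  have h := LinearMap.continuous_of_finiteDimensional (A.mulVecLin)
  have : (fun v : Fin p → ℝ => A.mulVec v) = ⇑A.mulVecLin := by
    funext v; simp [Matrix.mulVecLin_apply]
  rw [this]; exact h

lemma dot_continuous {q : ℕ} {α : Type*} [TopologicalSpace α]
    {f g : α → Fin q → ℝ} (hf : Continuous f) (hg : Continuous g) :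
    Continuous fun a => f a ⬝ᵥ g a := by
  have : (fun a => f a ⬝ᵥ g a) = fun a => ∑ i, f a i * g a i := by
    funext a; simp [dotProduct]
  rw [this]
  exact continuous_finset_sum _ fun i _ =>
    (((continuous_apply i).comp hf).mul ((continuous_apply i).comp hg))

end MainAux

open Topology Filter

set_option maxHeartbeats 1000000 in
theorem stmt_11 {m n k l : ℕ}
    (Γ : Matrix (Fin m) (Fin m) ℝ) (hΓ : Γ.PosDef)
    (C : Matrix (Fin n) (Fin n) ℝ) (hC : C.PosSemidef)
    (H : Matrix (Fin m) (Fin n) ℝ)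
    (y : Fin m → ℝ) (vhat : Fin n → ℝ)
    (F : Matrix (Fin k) (Fin n) ℝ) (G : Matrix (Fin l) (Fin n) ℝ)
    (f : Fin k → ℝ) (g : Fin l → ℝ)
    (y' : Fin m → ℝ) (hy' : y' = y - H.mulVec vhat)
    (astar vstar : Fin n → ℝ)
    -- (i): (astar, vstar) is feasible for the constrained penalized problem
    (hfeas : C.mulVec astar = vstar ∧ F.mulVec (vhat + vstar) = f ∧
      G.mulVec (vhat + vstar) ≤ g)
    -- and minimizes the penalized objective over the feasible set
    (hmin : ∀ a v' : Fin n → ℝ,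
      C.mulVec a = v' → F.mulVec (vhat + v') = f → G.mulVec (vhat + v') ≤ g →
      (1 / 2) * ((y' - H.mulVec vstar) ⬝ᵥ Γ⁻¹.mulVec (y' - H.mulVec vstar)) +
        (1 / 2) * (astar ⬝ᵥ vstar) ≤
      (1 / 2) * ((y' - H.mulVec v') ⬝ᵥ Γ⁻¹.mulVec (y' - H.mulVec v')) +
        (1 / 2) * (a ⬝ᵥ v'))
    -- the regularized objectives
    (Jeps : ℝ → (Fin n → ℝ) → ℝ)
    (hJeps : ∀ ε v, Jeps ε v =
      (1 / 2) * ((y - H.mulVec v) ⬝ᵥ Γ⁻¹.mulVec (y - H.mulVec v)) +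
      (1 / 2) * ((v - vhat) ⬝ᵥ (C + ε • 1)⁻¹.mulVec (v - vhat)))
    -- (ii): for each ε > 0, veps ε is feasible and minimizes Jeps ε over the
    -- constraint set
    (veps : ℝ → Fin n → ℝ)
    (hveps_feas : ∀ ε : ℝ, 0 < ε →
      F.mulVec (veps ε) = f ∧ G.mulVec (veps ε) ≤ g)
    (hveps_min : ∀ ε : ℝ, 0 < ε → ∀ v : Fin n → ℝ,
      F.mulVec v = f → G.mulVec v ≤ g → Jeps ε (veps ε) ≤ Jeps ε v) :
    Tendsto veps (𝓝[>] 0) (𝓝 (vhat + vstar)) := by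
  classical
  obtain ⟨hCa, hFv, hGv⟩ := hfeas
  set v0 : Fin n → ℝ := vhat + vstar with hv0def
  set K : ℝ := ∑ i, ∑ j, |C i j| with hKdef
  have hK0 : 0 ≤ K :=
    Finset.sum_nonneg fun i _ => Finset.sum_nonneg fun j _ => abs_nonneg _
  set M : ℝ := (1/2) * ((y' - H.mulVec vstar) ⬝ᵥ Γ⁻¹.mulVec (y' - H.mulVec vstar)) +
      (1/2) * (astar ⬝ᵥ vstar) with hMdef
  have hΓinv : Γ⁻¹.PosSemidef := hΓ.inv.posSemidef
  have hM0 : 0 ≤ M := by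
    have h1 := psd_nonneg hΓinv (y' - H.mulVec vstar)
    have h2 : (0:ℝ) ≤ astar ⬝ᵥ vstar := by rw [← hCa]; exact psd_nonneg hC astar
    rw [hMdef]; linarith
  -- Step A : Jeps ε v0 ≤ M
  have hJv0 : ∀ ε : ℝ, 0 < ε → Jeps ε v0 ≤ M := by
    intro ε hε
    rw [hJeps]
    have e1 : v0 - vhat = vstar := by rw [hv0def]; abel
    have e2 : y - H.mulVec v0 = y' - H.mulVec vstar := by
      rw [hy', hv0def, Matrix.mulVec_add]; abel
    rw [e1, e2, hMdef]
    have hvb := vstar_bound hC hε astar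
    rw [hCa] at hvb
    linarith
  -- Step B
  have hJle : ∀ ε : ℝ, 0 < ε → Jeps ε (veps ε) ≤ M := fun ε hε =>
    (hveps_min ε hε v0 hFv hGv).trans (hJv0 ε hε)
  -- Step C : penalty bound
  have hpen : ∀ ε : ℝ, 0 < ε →
      (veps ε - vhat) ⬝ᵥ (C + ε • (1 : Matrix (Fin n) (Fin n) ℝ))⁻¹.mulVec (veps ε - vhat)
        ≤ 2*M := by
    intro ε hε
    have h1 := hJle ε hε
    rw [hJeps] at h1
    have h2 := psd_nonneg hΓinv (y - H.mulVec (veps ε))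
    linarith
  -- Step D : gap bound
  have hgap : ∀ ε : ℝ, 0 < ε → ε ≤ 1 →
      (v0 - veps ε) ⬝ᵥ (v0 - veps ε) ≤ 4*(K+1)*(M - Jeps ε (veps ε)) := by
    intro ε hε hε1
    have hKε : (0:ℝ) < K + ε := by linarith
    have hK1 : (0:ℝ) < K + 1 := by linarith
    have hfe := hveps_feas ε hε
    set vε := veps ε with hvε
    obtain ⟨mid, hmid⟩ : ∃ mid : Fin n → ℝ, mid = (1/2 : ℝ) • (v0 + vε) := ⟨_, rfl⟩
    have hFmid : F.mulVec mid = f := by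
      rw [hmid, Matrix.mulVec_smul, Matrix.mulVec_add, hFv, hfe.1]
      funext i; simp; ring
    have hGmid : G.mulVec mid ≤ g := by
      intro i
      have h1 := hfe.2 i
      have h2 := hGv i
      have h3 : G.mulVec mid i = (1/2)*(G.mulVec v0 i + G.mulVec vε i) := by
        rw [hmid, Matrix.mulVec_smul, Matrix.mulVec_add]; simp
      rw [h3]; linarith
    have hmid_min := hveps_min ε hε mid hFmid hGmid
    -- A part
    have parA := parallelogram Γ⁻¹ (y - H.mulVec v0) (y - H.mulVec vε)
    have hHmid : H.mulVec mid = (1/2 : ℝ) • (H.mulVec v0 + H.mulVec vε) := by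
      rw [hmid, Matrix.mulVec_smul, Matrix.mulVec_add]
    have hsumA : (y - H.mulVec v0) + (y - H.mulVec vε) = (2:ℝ) • (y - H.mulVec mid) := by
      rw [hHmid]; funext i; simp; ring
    rw [hsumA, two_smul_quad] at parA
    have hposA := psd_nonneg hΓinv ((y - H.mulVec v0) - (y - H.mulVec vε))
    -- B part
    have parB := parallelogram (C + ε • (1 : Matrix (Fin n) (Fin n) ℝ))⁻¹
      (v0 - vhat) (vε - vhat)
    have hsumB : (v0 - vhat) + (vε - vhat) = (2:ℝ) • (mid - vhat) := by
      rw [hmid]; funext i; simp; ring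
    have hdiffB : (v0 - vhat) - (vε - vhat) = v0 - vε := by abel
    rw [hsumB, hdiffB, two_smul_quad] at parB
    have hposB : ((v0 - vε) ⬝ᵥ (v0 - vε))/(K+ε) ≤ (v0 - vε) ⬝ᵥ
        (C + ε • (1 : Matrix (Fin n) (Fin n) ℝ))⁻¹.mulVec (v0 - vε) := by
      rw [hKdef]; exact Pinv_lower hC hε _
    -- expand the three J's
    have hJ0 := hJeps ε v0
    have hJε := hJeps ε vε
    have hJm := hJeps ε mid
    -- combine
    have key : ((v0 - vε) ⬝ᵥ (v0 - vε))/(K+ε) ≤ 4*(Jeps ε v0 - Jeps ε vε) := by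
      linarith
    have key2 : ((v0 - vε) ⬝ᵥ (v0 - vε))/(K+1) ≤ ((v0 - vε) ⬝ᵥ (v0 - vε))/(K+ε) :=
      div_le_div_of_nonneg_left (dot_self_nonneg _) hKε (by linarith)
    have key3 : (v0 - vε) ⬝ᵥ (v0 - vε) ≤ 4*(Jeps ε v0 - Jeps ε vε)*(K+1) :=
      (div_le_iff₀ hK1).mp (key2.trans key)
    have hJM := hJv0 ε hε
    nlinarith [key3, hK1, hJM]
  -- Step E : Fenchel lower bound
  have hlow : ∀ ε : ℝ, 0 < ε → ∀ b : Fin n → ℝ,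
      (1/2) * ((y - H.mulVec (veps ε)) ⬝ᵥ Γ⁻¹.mulVec (y - H.mulVec (veps ε)))
        + b ⬝ᵥ (veps ε - vhat) - (1/2)*(b ⬝ᵥ C.mulVec b) - (ε/2)*(b ⬝ᵥ b)
        ≤ Jeps ε (veps ε) := by
    intro ε hε b
    have hf := fenchel (P_posdef hC hε) (veps ε - vhat) b
    have hq : b ⬝ᵥ (C + ε • (1 : Matrix (Fin n) (Fin n) ℝ)).mulVec b
        = b ⬝ᵥ C.mulVec b + ε * (b ⬝ᵥ b) := Pquad b
    rw [hq] at hf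
    rw [hJeps]
    linarith
  have hK1 : (0:ℝ) < K + 1 := by linarith
  -- main argument by contradiction
  rw [Metric.tendsto_nhds]
  by_contra hcon
  push_neg at hcon
  obtain ⟨δ, hδ, hfreq⟩ := hcon
  have hsel : ∀ j : ℕ, ∃ ε : ℝ,
      (ε ∈ Set.Ioo (0:ℝ) (min 1 (1/((j:ℝ)+1)))) ∧ δ ≤ dist (veps ε) v0 := by
    intro j
    have hr : (0:ℝ) < min 1 (1/((j:ℝ)+1)) := by positivity
    have hU : Set.Ioo (0:ℝ) (min 1 (1/((j:ℝ)+1))) ∈ 𝓝[>] (0:ℝ) :=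
      Ioo_mem_nhdsGT_of_mem ⟨le_refl 0, hr⟩
    obtain ⟨ε, hε1, hε2⟩ :=
      (hfreq.and_eventually (eventually_of_mem hU (fun x hx => hx))).exists
    exact ⟨ε, hε2, hε1⟩
  choose e he hd using hsel
  have he0 : ∀ j, 0 < e j := fun j => (he j).1
  have he1 : ∀ j : ℕ, e j ≤ 1 := fun j => ((he j).2.le.trans (min_le_left _ _))
  have hejlt : ∀ j : ℕ, e j < 1/((j:ℝ)+1) := fun j => (he j).2.trans_le (min_le_right _ _)
  have he_to0 : Tendsto e atTop (𝓝 0) :=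
    tendsto_of_tendsto_of_tendsto_of_le_of_le tendsto_const_nhds
      tendsto_one_div_add_atTop_nhds_zero_nat (fun j => (he0 j).le) (fun j => (hejlt j).le)
  -- boundedness
  have hball : ∀ j, veps (e j) ∈ Metric.closedBall vhat (Real.sqrt (2*M*(K+1))) := by
    intro j
    have hp := hpen (e j) (he0 j)
    have hlb := Pinv_lower hC (he0 j) (veps (e j) - vhat)
    rw [← hKdef] at hlb
    have huu : (veps (e j) - vhat) ⬝ᵥ (veps (e j) - vhat) ≤ 2*M*(K+1) := by
      have h1 : ((veps (e j) - vhat) ⬝ᵥ (veps (e j) - vhat))/(K + e j) ≤ 2*M :=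
        hlb.trans hp
      have h2 := (div_le_iff₀ (by linarith [he0 j] : (0:ℝ) < K + e j)).mp h1
      nlinarith [he1 j, hM0, he0 j, hK0]
    rw [Metric.mem_closedBall, dist_pi_le_iff (Real.sqrt_nonneg _)]
    intro i
    have hi : ((veps (e j) - vhat) i)^2 ≤ 2*M*(K+1) := (dot_le_sq i).trans huu
    have hde : dist (veps (e j) i) (vhat i) = |(veps (e j) - vhat) i| := by
      rw [Real.dist_eq]; simp
    rw [hde, ← Real.sqrt_sq_eq_abs]
    exact Real.sqrt_le_sqrt hi
  obtain ⟨w, -, φ, hφ, hwt⟩ :=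
    tendsto_subseq_of_bounded Metric.isBounded_closedBall hball
  set e' : ℕ → ℝ := fun j => e (φ j) with he'def
  have he'0 : ∀ j, 0 < e' j := fun j => he0 _
  have he'1 : ∀ j, e' j ≤ 1 := fun j => he1 _
  have he'_to0 : Tendsto e' atTop (𝓝 0) := he_to0.comp hφ.tendsto_atTop
  have hwt' : Tendsto (fun j => veps (e' j)) atTop (𝓝 w) := hwt
  have hdistw : ∀ j, δ ≤ dist (veps (e' j)) v0 := fun j => hd (φ j)
  -- constraints at the limit
  have hFw : F.mulVec w = f := by
    have h1 : Tendsto (fun j => F.mulVec (veps (e' j))) atTop (𝓝 (F.mulVec w)) :=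
      ((mulVec_continuous F).tendsto w).comp hwt'
    have h2 : (fun j => F.mulVec (veps (e' j))) = fun _ => f := by
      funext j; exact (hveps_feas _ (he'0 j)).1
    rw [h2] at h1
    exact tendsto_nhds_unique h1 tendsto_const_nhds
  have hGw : G.mulVec w ≤ g := by
    intro i
    have h1 : Tendsto (fun j => G.mulVec (veps (e' j)) i) atTop (𝓝 (G.mulVec w i)) :=
      (((continuous_apply i).comp (mulVec_continuous G)).tendsto w).comp hwt'
    exact le_of_tendsto h1 (Filter.Eventually.of_forall fun j => (hveps_feas _ (he'0 j)).2 i)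
  have hus_t : Tendsto (fun j => veps (e' j) - vhat) atTop (𝓝 (w - vhat)) :=
    hwt'.sub tendsto_const_nhds
  -- the limit lies in the range of C
  have hSclosed : IsClosed ((LinearMap.range C.mulVecLin : Submodule ℝ (Fin n → ℝ)) :
      Set (Fin n → ℝ)) :=
    Submodule.closed_of_finiteDimensional _
  have hrange : ∀ j, (veps (e' j) - vhat) - e' j •
      (C + e' j • (1:Matrix (Fin n) (Fin n) ℝ))⁻¹.mulVec (veps (e' j) - vhat)
        ∈ LinearMap.range C.mulVecLin := by
    intro j
    refine ⟨(C + e' j • (1:Matrix (Fin n) (Fin n) ℝ))⁻¹.mulVec (veps (e' j) - vhat), ?_⟩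
    have hPz := Pmv (C := C) (ε := e' j)
      ((C + e' j • (1:Matrix (Fin n) (Fin n) ℝ))⁻¹.mulVec (veps (e' j) - vhat))
    have hcancel : (C + e' j • (1:Matrix (Fin n) (Fin n) ℝ)).mulVec
        ((C + e' j • (1:Matrix (Fin n) (Fin n) ℝ))⁻¹.mulVec (veps (e' j) - vhat))
          = veps (e' j) - vhat :=
      mulVec_inv_cancel (P_posdef hC (he'0 j)) _
    rw [hcancel] at hPz
    rw [Matrix.mulVecLin_apply]
    exact eq_sub_of_add_eq hPz.symm
  have hnorm : ∀ j, ‖e' j •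
      (C + e' j • (1:Matrix (Fin n) (Fin n) ℝ))⁻¹.mulVec (veps (e' j) - vhat)‖
        ≤ Real.sqrt (2*M*(e' j)) := by
    intro j
    set z := (C + e' j • (1:Matrix (Fin n) (Fin n) ℝ))⁻¹.mulVec (veps (e' j) - vhat) with hz
    have hsq := Pinv_sq_bound hC (he'0 j) (veps (e' j) - vhat)
    have hp := hpen (e' j) (he'0 j)
    rw [← hz] at hsq hp
    have h4 : e' j * (z ⬝ᵥ z) ≤ 2*M := hsq.trans hp
    rw [pi_norm_le_iff_of_nonneg (Real.sqrt_nonneg _)]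
    intro i
    have h3 : (z i)^2 ≤ z ⬝ᵥ z := dot_le_sq i
    have h2 : (e' j * z i)^2 ≤ 2*M*(e' j) := by
      have ha : (e' j)^2 * (z i)^2 ≤ (e' j)^2 * (z ⬝ᵥ z) :=
        mul_le_mul_of_nonneg_left h3 (sq_nonneg _)
      have hb2 : (e' j)*((e' j)*(z ⬝ᵥ z)) ≤ (e' j)*(2*M) :=
        mul_le_mul_of_nonneg_left h4 (he'0 j).le
      nlinarith [ha, hb2]
    have h5 : ‖(e' j • z) i‖ = |e' j * z i| := by simp [Real.norm_eq_abs, abs_mul]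
    rw [h5, ← Real.sqrt_sq_eq_abs]
    exact Real.sqrt_le_sqrt h2
  have hz_to0 : Tendsto (fun j => e' j •
      (C + e' j • (1:Matrix (Fin n) (Fin n) ℝ))⁻¹.mulVec (veps (e' j) - vhat))
        atTop (𝓝 0) := by
    apply squeeze_zero_norm hnorm
    have h1 : Tendsto (fun j => 2*M*(e' j)) atTop (𝓝 0) := by
      simpa using he'_to0.const_mul (2*M)
    have h2 := (Real.continuous_sqrt.tendsto 0).comp h1
    simpa [Function.comp_def] using h2
  have hrs_t : Tendsto (fun j => (veps (e' j) - vhat) - e' j •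
      (C + e' j • (1:Matrix (Fin n) (Fin n) ℝ))⁻¹.mulVec (veps (e' j) - vhat))
        atTop (𝓝 (w - vhat)) := by
    have h := hus_t.sub hz_to0
    rw [sub_zero] at h
    exact h
  have humem : w - vhat ∈ LinearMap.range C.mulVecLin :=
    hSclosed.mem_of_tendsto hrs_t (Filter.Eventually.of_forall hrange)
  obtain ⟨b, hb⟩ := humem
  rw [Matrix.mulVecLin_apply] at hb
  -- the upper bound on J along the subsequence
  have hc0 : (0:ℝ) < δ^2/(4*(K+1)) := by positivity
  have hJub : ∀ j, Jeps (e' j) (veps (e' j)) ≤ M - δ^2/(4*(K+1)) := by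
    intro j
    have hg := hgap (e' j) (he'0 j) (he'1 j)
    have hδ2 : δ^2 ≤ (v0 - veps (e' j)) ⬝ᵥ (v0 - veps (e' j)) := by
      have hdle : dist (veps (e' j)) v0
          ≤ Real.sqrt ((v0 - veps (e' j)) ⬝ᵥ (v0 - veps (e' j))) := by
        rw [dist_pi_le_iff (Real.sqrt_nonneg _)]
        intro i
        have h3 : ((v0 - veps (e' j)) i)^2
            ≤ (v0 - veps (e' j)) ⬝ᵥ (v0 - veps (e' j)) := dot_le_sq i
        have h4 : dist (veps (e' j) i) (v0 i) = |(v0 - veps (e' j)) i| := by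
          rw [Real.dist_eq, abs_sub_comm]; simp
        rw [h4, ← Real.sqrt_sq_eq_abs]
        exact Real.sqrt_le_sqrt h3
      have h5 := (hdistw j).trans hdle
      have h6 := Real.sq_sqrt (dot_self_nonneg (v0 - veps (e' j)))
      nlinarith [Real.sqrt_nonneg ((v0 - veps (e' j)) ⬝ᵥ (v0 - veps (e' j))), hδ.le]
    have h6 : δ^2 ≤ 4*(K+1)*(M - Jeps (e' j) (veps (e' j))) := hδ2.trans hg
    have h7 : δ^2/(4*(K+1)) ≤ M - Jeps (e' j) (veps (e' j)) := by
      rw [div_le_iff₀ (by positivity : (0:ℝ) < 4*(K+1))]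
      nlinarith [h6]
    linarith
  -- lower bound sequence and its limit
  have hlowseq : ∀ j,
      (1/2) * ((y - H.mulVec (veps (e' j))) ⬝ᵥ Γ⁻¹.mulVec (y - H.mulVec (veps (e' j))))
        + b ⬝ᵥ (veps (e' j) - vhat) - (1/2)*(b ⬝ᵥ C.mulVec b) - ((e' j)/2)*(b ⬝ᵥ b)
        ≤ M - δ^2/(4*(K+1)) :=
    fun j => (hlow (e' j) (he'0 j) b).trans (hJub j)
  have hΦcont : Continuous fun v : Fin n → ℝ =>
      (y - H.mulVec v) ⬝ᵥ Γ⁻¹.mulVec (y - H.mulVec v) := by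
    have h1 : Continuous fun v : Fin n → ℝ => y - H.mulVec v :=
      continuous_const.sub (mulVec_continuous H)
    exact dot_continuous h1 ((mulVec_continuous Γ⁻¹).comp h1)
  have hbu : Tendsto (fun j => b ⬝ᵥ (veps (e' j) - vhat)) atTop (𝓝 (b ⬝ᵥ (w - vhat))) := by
    have hcb : Continuous fun v : Fin n → ℝ => b ⬝ᵥ v :=
      dot_continuous continuous_const continuous_id
    exact (hcb.tendsto (w - vhat)).comp hus_t
  have hL : Tendsto (fun j =>
      (1/2) * ((y - H.mulVec (veps (e' j))) ⬝ᵥ Γ⁻¹.mulVec (y - H.mulVec (veps (e' j))))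
        + b ⬝ᵥ (veps (e' j) - vhat) - (1/2)*(b ⬝ᵥ C.mulVec b) - ((e' j)/2)*(b ⬝ᵥ b))
      atTop (𝓝 ((1/2) * ((y - H.mulVec w) ⬝ᵥ Γ⁻¹.mulVec (y - H.mulVec w))
        + b ⬝ᵥ (w - vhat) - (1/2)*(b ⬝ᵥ C.mulVec b) - 0)) := by
    refine Tendsto.sub (Tendsto.sub (Tendsto.add ?_ hbu) tendsto_const_nhds) ?_
    · exact tendsto_const_nhds.mul ((hΦcont.tendsto w).comp hwt')
    · have h1 := (he'_to0.div_const 2).mul_const (b ⬝ᵥ b)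
      simpa using h1
  have hlim_le : (1/2) * ((y - H.mulVec w) ⬝ᵥ Γ⁻¹.mulVec (y - H.mulVec w))
      + b ⬝ᵥ (w - vhat) - (1/2)*(b ⬝ᵥ C.mulVec b) - 0 ≤ M - δ^2/(4*(K+1)) :=
    le_of_tendsto hL (Filter.Eventually.of_forall hlowseq)
  -- contradiction with hmin
  have hwu : vhat + (w - vhat) = w := by abel
  have hminw := hmin b (w - vhat) hb (by rw [hwu]; exact hFw) (by rw [hwu]; exact hGw)
  have hyw : y' - H.mulVec (w - vhat) = y - H.mulVec w := by
    rw [hy', Matrix.mulVec_sub]; abel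
  rw [hyw] at hminw
  have hbCb : b ⬝ᵥ C.mulVec b = b ⬝ᵥ (w - vhat) := by rw [hb]
  linarith [hlim_le, hminw, hc0, hbCb]
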